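/- Let A be a schurian S-ring over a finite abelian group G and let S = U/L be an A-section of G such that at least one of the following conditions holds: (1) A is a CI-S-ring and S_r is a normal subgroup of Aut(A)^S; (2) A_S is a normal CI-S-ring. Then for every f ∈ iso_e(A) with S^f = S, the induced bijection f^S is an automorphism of the group S. In particular, f^S = id_S whenever f^S fixes pointwise a generating set of S. -/

import Mathlib

open Pointwise

/-! ### Cayley digraphs and CI-subsets (groups written additively) -/

/-- The arc set `R(S) = {(g, s+g) : g ∈ G, s ∈ S}` of the Cayley digraph `Cay(G,S)`. -/
def arcs {G : Type*} [AddGroup G] (S : Set G) : Set (G × G) :=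
  {a | ∃ s ∈ S, a.2 = s + a.1}

/-- The image `R^f` of a set of arcs under a permutation `f`. -/
def pmap {G : Type*} (f : Equiv.Perm G) (R : Set (G × G)) : Set (G × G) :=
  (fun a => (f a.1, f a.2)) '' R

/-- `S ⊆ G` is a CI-subset: every Cayley digraph isomorphic to `Cay(G,S)` is Cayley
isomorphic to it. -/
def IsCISubset {G : Type*} [AddGroup G] (S : Set G) : Prop :=
  ∀ T : Set G, (∃ f : Equiv.Perm G, pmap f (arcs S) = arcs T) →
    ∃ φ : G ≃+ G, ⇑φ '' S = T

/-- `G` is a DCI-group: every subset of `G` is a CI-subset. -/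
def IsDCI (G : Type*) [AddGroup G] : Prop := ∀ S : Set G, IsCISubset S

/-! ### S-rings, given by their partitions into basic sets.

The condition that the ℤ-span of the blocks is a subring of the group ring is encoded
combinatorially: the number of ways to write an element as a sum `x + y` with `x ∈ X`,
`y ∈ Y` (for blocks `X, Y`) is constant on each block. -/

structure SRing (G : Type*) [AddGroup G] where
  blocks : Set (Set G)
  nonempty_mem : ∀ X ∈ blocks, X.Nonempty
  existsUnique_mem : ∀ g : G, ∃! X, X ∈ blocks ∧ g ∈ X
  zero_mem : ({0} : Set G) ∈ blocks
  neg_mem : ∀ X ∈ blocks, -X ∈ blocks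
  count_const : ∀ X ∈ blocks, ∀ Y ∈ blocks, ∀ Z ∈ blocks, ∀ z ∈ Z, ∀ z' ∈ Z,
    {a : G × G | a.1 ∈ X ∧ a.2 ∈ Y ∧ a.1 + a.2 = z}.ncard =
      {a : G × G | a.1 ∈ X ∧ a.2 ∈ Y ∧ a.1 + a.2 = z'}.ncard

/-- The automorphisms of an S-ring with family of basic sets `Bl`:
permutations preserving each arc set `R(X)`, `X ∈ Bl`. -/
def autPerm {G : Type*} [AddGroup G] (Bl : Set (Set G)) : Set (Equiv.Perm G) :=
  {f | ∀ X ∈ Bl, pmap f (arcs X) = arcs X}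

/-- The isomorphisms from an S-ring with basic sets `Bl` onto some S-ring over `G`. -/
def isoPerm {G : Type*} [AddGroup G] (Bl : Set (Set G)) : Set (Equiv.Perm G) :=
  {f | ∃ B : SRing G,
    {R | ∃ X ∈ Bl, R = pmap f (arcs X)} = {R | ∃ Y ∈ B.blocks, R = arcs Y}}

/-- An S-ring is CI if `iso(A) = Aut(A)Aut(G)` (composition: first the S-ring
automorphism, then the group automorphism). -/
def IsCIBlocks {G : Type*} [AddGroup G] (Bl : Set (Set G)) : Prop :=
  isoPerm Bl = {f | ∃ γ ∈ autPerm Bl, ∃ φ : G ≃+ G, ∀ x, f x = φ (γ x)}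

/-- The right translation `x ↦ x + g` as a permutation. -/
def addRightPerm {G : Type*} [AddGroup G] (g : G) : Equiv.Perm G := Equiv.addRight g

/-- `G_r`, the set of right translations of `G`. -/
def rSet (G : Type*) [AddGroup G] : Set (Equiv.Perm G) := Set.range addRightPerm

/-- The basic sets of `V(K,G)`: the orbits on `G` of the stabilizer `K_e` of the
identity in `K`. -/
def VBlocks {G : Type*} [AddGroup G] (K : Set (Equiv.Perm G)) : Set (Set G) :=
  {O | ∃ g : G, O = {h | ∃ k ∈ K, k 0 = 0 ∧ k g = h}}

/-- An S-ring is schurian if it equals `V(K,G)` for some `G_r ≤ K ≤ Sym(G)`. -/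
def IsSchurianBlocks {G : Type*} [AddGroup G] (Bl : Set (Set G)) : Prop :=
  ∃ K : Subgroup (Equiv.Perm G), rSet G ⊆ (K : Set (Equiv.Perm G)) ∧
    Bl = VBlocks (K : Set (Equiv.Perm G))

/-- `f` lies in the 2-closure of `K`: on every pair it agrees with some member of `K`. -/
def in2Closure {G : Type*} (K : Set (Equiv.Perm G)) (f : Equiv.Perm G) : Prop :=
  ∀ a b : G, ∃ k ∈ K, k a = f a ∧ k b = f b

/-- `K` is 2-closed: `K = K^(2)`. -/
def Is2Closed {G : Type*} (K : Subgroup (Equiv.Perm G)) : Prop :=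
  ∀ f, in2Closure (K : Set (Equiv.Perm G)) f → f ∈ K

/-- Conjugate `S^γ` of a set of permutations. -/
def conjSet {G : Type*} (γ : Equiv.Perm G) (S : Set (Equiv.Perm G)) : Set (Equiv.Perm G) :=
  (fun s => γ⁻¹ * s * γ) '' S

/-- `K1 ⪯_G K2`: `K1` is a `G`-complete subgroup of `K2`. -/
def GComplete {G : Type*} [AddGroup G] (K1 K2 : Subgroup (Equiv.Perm G)) : Prop :=
  K1 ≤ K2 ∧ ∀ γ : Equiv.Perm G, conjSet γ (rSet G) ⊆ (K2 : Set (Equiv.Perm G)) →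
    ∃ δ ∈ K2, conjSet δ (conjSet γ (rSet G)) ⊆ (K1 : Set (Equiv.Perm G))

/-- `K ∈ Sup_2(G_r)`: `K` is a 2-closed subgroup of `Sym(G)` containing `G_r`. -/
def InSup2 {G : Type*} [AddGroup G] (K : Subgroup (Equiv.Perm G)) : Prop :=
  rSet G ⊆ (K : Set (Equiv.Perm G)) ∧ Is2Closed K

/-- `K ∈ Sup_2^min(G_r)`: `K` is a minimal element of `(Sup_2(G_r), ⪯_G)`. -/
def InSup2Min {G : Type*} [AddGroup G] (K : Subgroup (Equiv.Perm G)) : Prop :=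
  InSup2 K ∧ ∀ K' : Subgroup (Equiv.Perm G), InSup2 K' → GComplete K' K → K' = K

/-! ### A-sets, A-subgroups, sections, radicals, products -/

/-- `X` is an `A`-set: a union of basic sets. -/
def IsASet {G : Type*} [AddGroup G] (Bl : Set (Set G)) (X : Set G) : Prop :=
  ∃ C ⊆ Bl, X = ⋃₀ C

/-- An `A`-subgroup. -/
def IsASubgroup {G : Type*} [AddGroup G] (Bl : Set (Set G)) (U : AddSubgroup G) : Prop :=
  IsASet Bl (U : Set G)

/-- The radical `rad(X) = {g : g + X = X + g = X}`. -/
def radSet {G : Type*} [AddGroup G] (X : Set G) : Set G :=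
  {g | (fun x => g + x) '' X = X ∧ (fun x => x + g) '' X = X}

/-- `A` is the `S`-wreath (generalized wreath) product for the section `S = U/L`. -/
def IsWreath {G : Type*} [AddGroup G] (Bl : Set (Set G)) (U L : AddSubgroup G) : Prop :=
  IsASubgroup Bl U ∧ IsASubgroup Bl L ∧ L ≤ U ∧ L.Normal ∧
    ∀ X ∈ Bl, ¬X ⊆ (U : Set G) → (L : Set G) ⊆ radSet X

/-- Nontrivial (proper) `S`-wreath product. -/
def IsNontrivialWreath {G : Type*} [AddGroup G] (Bl : Set (Set G))
    (U L : AddSubgroup G) : Prop :=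
  IsWreath Bl U L ∧ L ≠ ⊥ ∧ U ≠ ⊤

/-- `A` is decomposable: a nontrivial generalized wreath product. -/
def IsDecomposable {G : Type*} [AddGroup G] (Bl : Set (Set G)) : Prop :=
  ∃ U L : AddSubgroup G, IsNontrivialWreath Bl U L

/-! ### Cyclotomic S-rings, Cayley minimality, 2-minimality, normality -/

/-- The multiplicative group structure (composition) on `AddAut G`, as in the older Mathlib. -/
instance addAutGroupComp {G : Type*} [Add G] : Group (AddAut G) where
  mul g h := AddEquiv.trans h g
  one := AddEquiv.refl _
  inv := AddEquiv.symm
  mul_assoc _ _ _ := rfl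
  one_mul _ := rfl
  mul_one _ := rfl
  inv_mul_cancel := AddEquiv.self_trans_symm

/-- The set of orbits on `G` of a group `M` of automorphisms of `G`. -/
def autOrbits {G : Type*} [AddGroup G] (M : Subgroup (AddAut G)) : Set (Set G) :=
  {O | ∃ g : G, O = {h | ∃ φ ∈ M, φ g = h}}

/-- An S-ring is cyclotomic if its basic sets are the orbits of a group of
automorphisms of `G`. -/
def IsCyclotomic {G : Type*} [AddGroup G] (Bl : Set (Set G)) : Prop :=
  ∃ M : Subgroup (AddAut G), Bl = autOrbits M

/-- `aut_G(A) = Aut(A) ∩ Aut(G)`. -/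
def autAddSet {G : Type*} [AddGroup G] (Bl : Set (Set G)) : Set (AddAut G) :=
  {φ | (φ : G ≃+ G).toEquiv ∈ autPerm Bl}

/-- Two sets of automorphisms have the same orbits on `G`. -/
def sameAutOrbits {G : Type*} [AddGroup G] (K M : Set (AddAut G)) : Prop :=
  ∀ g : G, {h | ∃ φ ∈ K, φ g = h} = {h | ∃ φ ∈ M, φ g = h}

/-- A (cyclotomic) S-ring is Cayley minimal if the only subgroup of `Aut(G)` Cayley
equivalent to `aut_G(A)` is `aut_G(A)` itself. -/
def IsCayleyMinimal {G : Type*} [AddGroup G] (Bl : Set (Set G)) : Prop :=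
  IsCyclotomic Bl ∧ ∀ K : Subgroup (AddAut G),
    sameAutOrbits (K : Set (AddAut G)) (autAddSet Bl) →
      (K : Set (AddAut G)) = autAddSet Bl

/-- Two sets of permutations have the same orbits on `G × G`. -/
def samePairOrbits {G : Type*} (K M : Set (Equiv.Perm G)) : Prop :=
  ∀ a b : G, {c : G × G | ∃ f ∈ K, (f a, f b) = c} = {c : G × G | ∃ f ∈ M, (f a, f b) = c}

/-- An S-ring is 2-minimal if the only subgroup of `Sym(G)` containing `G_r` and
2-equivalent to `Aut(A)` is `Aut(A)` itself. -/
def Is2Minimal {G : Type*} [AddGroup G] (Bl : Set (Set G)) : Prop :=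
  ∀ K : Subgroup (Equiv.Perm G), rSet G ⊆ (K : Set (Equiv.Perm G)) →
    samePairOrbits (K : Set (Equiv.Perm G)) (autPerm Bl) →
      (K : Set (Equiv.Perm G)) = autPerm Bl

/-- An S-ring is normal if `G_r` is normal in `Aut(A)`. -/
def IsNormalBlocks {G : Type*} [AddGroup G] (Bl : Set (Set G)) : Prop :=
  ∀ σ ∈ autPerm Bl, ∀ t ∈ rSet G, σ * t * σ⁻¹ ∈ rSet G

/-- A set of permutations normalizes another one. -/
def normalizesInto {M : Type*} [Group M] (Δ N : Set M) : Prop :=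
  ∀ σ ∈ Δ, ∀ t ∈ N, σ * t * σ⁻¹ ∈ N

/-! ### Kernels, restriction to subgroups, quotients and sections -/

/-- `Aut(A)_{G/L}`: the automorphisms of the S-ring fixing every `L`-coset setwise. -/
def kernelPerm {G : Type*} [AddGroup G] (Bl : Set (Set G)) (L : AddSubgroup G) :
    Set (Equiv.Perm G) :=
  {f | f ∈ autPerm Bl ∧ ∀ g : G, ⇑f '' ((L : Set G) + {g}) = (L : Set G) + {g}}

/-- The basic sets of `A_U` (for an `A`-subgroup `U`), as subsets of `U`. -/
def subBlocks {G : Type*} [AddGroup G] (Bl : Set (Set G)) (U : AddSubgroup G) :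
    Set (Set U) :=
  {Z | ∃ X ∈ Bl, X ⊆ (U : Set G) ∧ Z = ((Subtype.val) ⁻¹' X : Set U)}

/-- The basic sets of `A_{G/L}`: images of basic sets under `G → G/L`. -/
def quotBlocks {G : Type*} [AddGroup G] (Bl : Set (Set G)) (L : AddSubgroup G) :
    Set (Set (G ⧸ L)) :=
  {Z | ∃ X ∈ Bl, Z = (QuotientAddGroup.mk : G → G ⧸ L) '' X}

/-- The basic sets of `A_S` for the section `S = U/L`: images under `U → U/L` of the
basic sets contained in `U`. -/
def secBlocks {G : Type*} [AddGroup G] (Bl : Set (Set G)) (U L : AddSubgroup G) :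
    Set (Set (U ⧸ L.addSubgroupOf U)) :=
  {Z | ∃ X ∈ Bl, X ⊆ (U : Set G) ∧
    Z = (QuotientAddGroup.mk : U → U ⧸ L.addSubgroupOf U) '' {u : U | (u : G) ∈ X}}

/-- The permutations of an (invariant) subgroup `U` induced by members of `F`. -/
def inducedPerm {G : Type*} [AddGroup G] (F : Set (Equiv.Perm G)) (U : AddSubgroup G) :
    Set (Equiv.Perm U) :=
  {σ | ∃ f ∈ F, ∀ x : U, (σ x : G) = f (x : G)}

/-- The automorphisms of an (invariant) subgroup `U` induced by members of `F ⊆ Aut(G)`. -/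
def inducedAddAut {G : Type*} [AddGroup G] (F : Set (AddAut G)) (U : AddSubgroup G) :
    Set (AddAut U) :=
  {σ | ∃ φ ∈ F, ∀ x : U, ((σ x : U) : G) = φ (x : G)}

/-- `S^f = S`: the permutation `f` maps `U` onto itself and permutes the `L`-cosets
inside `U`. -/
def secInvariant {G : Type*} [AddGroup G] (f : Equiv.Perm G) (U L : AddSubgroup G) : Prop :=
  ⇑f '' (U : Set G) = (U : Set G) ∧
    ∀ u ∈ U, ⇑f '' ((L : Set G) + {u}) = (L : Set G) + {f u}

/-- `σ` is the bijection `f^S` of the section `S = U/L` induced by `f`. -/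
def inducesOnSec {G : Type*} [AddGroup G] (f : Equiv.Perm G) (U L : AddSubgroup G)
    (σ : Equiv.Perm (U ⧸ L.addSubgroupOf U)) : Prop :=
  ∀ u v : U, f (u : G) = (v : G) →
    σ (QuotientAddGroup.mk u) = QuotientAddGroup.mk v

/-- `Δ^S`: the bijections of the section `S = U/L` induced by members of `Δ`
leaving `S` invariant. -/
def secPerms {G : Type*} [AddGroup G] (F : Set (Equiv.Perm G)) (U L : AddSubgroup G) :
    Set (Equiv.Perm (U ⧸ L.addSubgroupOf U)) :=
  {σ | ∃ f ∈ F, secInvariant f U L ∧ inducesOnSec f U L σ}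

/-- `K^S` for `K ≤ Aut(U)`: automorphisms of `S = U/L` induced by members of `K`. -/
def secAutOfSub {G : Type*} [AddCommGroup G] (U L : AddSubgroup G)
    (K : Set (AddAut U)) : Set (AddAut (U ⧸ L.addSubgroupOf U)) :=
  {ψ | ∃ φ ∈ K, ∀ u : U, ψ (QuotientAddGroup.mk u) = QuotientAddGroup.mk (φ u)}

/-- `K^S` for `K ≤ Aut(G/L)`: automorphisms of `S = U/L` obtained by restricting
members of `K`. -/
def secAutOfQuot {G : Type*} [AddCommGroup G] (U L : AddSubgroup G)
    (K : Set (AddAut (G ⧸ L))) : Set (AddAut (U ⧸ L.addSubgroupOf U)) :=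
  {ψ | ∃ φ ∈ K, ∀ u v : U,
    φ (QuotientAddGroup.mk (u : G)) = QuotientAddGroup.mk (v : G) →
      ψ (QuotientAddGroup.mk u) = QuotientAddGroup.mk v}

/-! ### p-S-rings and some particular S-rings -/

/-- A `p`-S-ring: all basic sets have `p`-power size. -/
def IsPSRing {G : Type*} [AddGroup G] (p : ℕ) (Bl : Set (Set G)) : Prop :=
  ∀ X ∈ Bl, ∃ k : ℕ, X.ncard = p ^ k

/-- The family `Bl` of basic sets is that of `ℤC_p ≀ ℤC_p ≀ ℤC_p`: singletons in `B1`,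
`B1`-cosets in `B2 \ B1`, and `B2`-cosets outside `B2`. -/
def IsWr3Blocks {G : Type*} [AddGroup G] (p : ℕ) (Bl : Set (Set G)) : Prop :=
  ∃ B1 B2 : AddSubgroup G, B1 < B2 ∧ (B1 : Set G).ncard = p ∧
    (B2 : Set G).ncard = p ^ 2 ∧
    ∀ X : Set G, X ∈ Bl ↔
      ((∃ x ∈ B1, X = {x}) ∨
        (∃ x ∈ (B2 : Set G) \ (B1 : Set G), X = (B1 : Set G) + {x}) ∨
        (∃ x ∈ (Set.univ : Set G) \ (B2 : Set G), X = (B2 : Set G) + {x}))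

/-- The family `Bl` of basic sets is that of `ℤC_p ≀ ℤC_p²`: singletons in `B1` and
`B1`-cosets outside `B1`. -/
def IsWrCpCp2Blocks {G : Type*} [AddGroup G] (p : ℕ) (Bl : Set (Set G)) : Prop :=
  ∃ B1 : AddSubgroup G, (B1 : Set G).ncard = p ∧
    ∀ X : Set G, X ∈ Bl ↔
      ((∃ x ∈ B1, X = {x}) ∨ (∃ x : G, x ∉ B1 ∧ X = (B1 : Set G) + {x}))

/-- The unipotent map `σ(x,y,z) = (x, x+y, y+z)` on `(ℤ/p)³` defining `D_p`. -/
def dpStep (p : ℕ) (v : Fin 3 → ZMod p) : Fin 3 → ZMod p :=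
  ![v 0, v 0 + v 1, v 1 + v 2]

/-- The orbit of a point under the cyclic group generated by `σ`. -/
def dpOrbit (p : ℕ) (x : Fin 3 → ZMod p) : Set (Fin 3 → ZMod p) :=
  {y | ∃ k : ℕ, (dpStep p)^[k] x = y}

/-- The family `Bl` of basic sets is (isomorphic to) that of the S-ring `D_p`. -/
def IsDpBlocks {W : Type*} [AddGroup W] (p : ℕ) (Bl : Set (Set W)) : Prop :=
  ∃ e : W ≃+ (Fin 3 → ZMod p), (fun X => ⇑e '' X) '' Bl = Set.range (dpOrbit p)

/-! ### Cayley graph automorphisms and regular subgroups -/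

/-- `Aut(Cay(G,X))`. -/
def autCaySet {G : Type*} [AddGroup G] (X : Set G) : Set (Equiv.Perm G) :=
  {f | pmap f (arcs X) = arcs X}

/-- A regular subgroup of `Sym(G)`: transitive, and only the identity has a fixed point. -/
def IsRegularSubgroup {G : Type*} (K : Subgroup (Equiv.Perm G)) : Prop :=
  (∀ a b : G, ∃ k ∈ K, k a = b) ∧ ∀ k ∈ K, (∃ a : G, k a = a) → k = 1

/-! ### The groups `C_p^4 × C_q` -/

/-- The Sylow `p`-subgroup `P` of `C_p^4 × C_q`. -/
def Psub (p q : ℕ) : AddSubgroup ((Fin 4 → ZMod p) × ZMod q) :=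
  (⊤ : AddSubgroup (Fin 4 → ZMod p)).prod ⊥

/-- The Sylow `q`-subgroup `Q` of `C_p^4 × C_q`. -/
def Qsub (p q : ℕ) : AddSubgroup ((Fin 4 → ZMod p) × ZMod q) :=
  (⊥ : AddSubgroup (Fin 4 → ZMod p)).prod ⊤



/-! ### Auxiliary lemmas for Statement 3 -/

set_option linter.unusedSectionVars false
set_option maxHeartbeats 1000000

section Aux
variable {G : Type*} [AddCommGroup G]

lemma mem_arcs {X : Set G} {a b : G} : (a, b) ∈ arcs X ↔ b - a ∈ X := by
  constructor
  · rintro ⟨s, hs, h⟩; rw [show b = s + a from h]; simpa using hs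
  · intro h; exact ⟨b - a, h, by abel⟩

lemma mem_pmap_iff {f : Equiv.Perm G} {R : Set (G × G)} {a b : G} :
    (f a, f b) ∈ pmap f R ↔ (a, b) ∈ R := by
  constructor
  · rintro ⟨⟨c, d⟩, h, he⟩
    obtain ⟨h1, h2⟩ := Prod.mk.injEq .. ▸ he
    rwa [← f.injective h1, ← f.injective h2]
  · intro h; exact ⟨(a, b), h, rfl⟩

lemma arcs_injective {X Y : Set G} (h : arcs X = arcs Y) : X = Y := by
  ext x
  have : ((0 : G), x) ∈ arcs X ↔ ((0 : G), x) ∈ arcs Y := by rw [h]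
  simpa [mem_arcs] using this

lemma pmap_pmap_inv {f : Equiv.Perm G} {R : Set (G × G)} : pmap f⁻¹ (pmap f R) = R := by
  simp only [pmap, ← Set.image_comp]
  convert Set.image_id R
  ext ⟨a, b⟩ <;> simp

lemma pmap_pmap_inv' {f : Equiv.Perm G} {R : Set (G × G)} : pmap f (pmap f⁻¹ R) = R := by
  have := pmap_pmap_inv (f := f⁻¹) (R := R); rwa [inv_inv] at this

/-- Membership in a coset, difference form. -/
lemma mem_coset {L : AddSubgroup G} {u a : G} : a ∈ (L : Set G) + {u} ↔ a - u ∈ L := by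
  rw [Set.add_singleton]
  constructor
  · rintro ⟨l, hl, rfl⟩; simpa using hl
  · intro h; exact ⟨a - u, h, sub_add_cancel a u⟩

variable (A : SRing G)

lemma block_eq {X X' : Set G} (hX : X ∈ A.blocks) (hX' : X' ∈ A.blocks) {g : G}
    (hg : g ∈ X) (hg' : g ∈ X') : X = X' := by
  obtain ⟨Z, _, hZu⟩ := A.existsUnique_mem g
  rw [hZu X ⟨hX, hg⟩, hZu X' ⟨hX', hg'⟩]

lemma exists_block (g : G) : ∃ X ∈ A.blocks, g ∈ X := by
  obtain ⟨Z, ⟨h1, h2⟩, _⟩ := A.existsUnique_mem g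
  exact ⟨Z, h1, h2⟩

lemma block_subset_of_isASet {P : Set G} (hP : IsASet A.blocks P) {X : Set G} {g : G}
    (hX : X ∈ A.blocks) (hg : g ∈ X) (hgP : g ∈ P) : X ⊆ P := by
  obtain ⟨C, hC, rfl⟩ := hP
  obtain ⟨Y, hY, hgY⟩ := Set.mem_sUnion.mp hgP
  rw [block_eq A hX (hC hY) hg hgY]
  exact Set.subset_sUnion_of_mem hY

lemma autPerm_arc_iff {Bl : Set (Set G)} {f : Equiv.Perm G} (hf : f ∈ autPerm Bl)
    {X : Set G} (hX : X ∈ Bl) {a b : G} :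
    (a, b) ∈ arcs X ↔ (f a, f b) ∈ arcs X := by
  have h := hf X hX
  constructor
  · intro hab; rw [← h]; exact ⟨(a, b), hab, rfl⟩
  · intro hab; rw [← h] at hab; exact mem_pmap_iff.mp hab

lemma autPerm_inv {Bl : Set (Set G)} {f : Equiv.Perm G} (hf : f ∈ autPerm Bl) :
    f⁻¹ ∈ autPerm Bl := by
  intro X hX
  have h := hf X hX
  conv_lhs => rw [← h]
  exact pmap_pmap_inv

lemma autPerm_image_block {f : Equiv.Perm G} (hf : f ∈ autPerm A.blocks) (hf0 : f 0 = 0)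
    {X : Set G} (hX : X ∈ A.blocks) : f '' X = X := by
  ext y; constructor
  · rintro ⟨x, hx, rfl⟩
    have h1 : ((0 : G), x) ∈ arcs X := mem_arcs.mpr (by simpa using hx)
    have h2 := (autPerm_arc_iff hf hX).mp h1
    rw [hf0] at h2
    simpa [mem_arcs] using h2
  · intro hy
    have h1 : (f 0, f (f.symm y)) ∈ arcs X := by
      rw [hf0, f.apply_symm_apply]; exact mem_arcs.mpr (by simpa using hy)
    have h2 := (autPerm_arc_iff hf hX).mpr h1
    exact ⟨f.symm y, by simpa [mem_arcs] using h2, f.apply_symm_apply y⟩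

lemma autPerm_diff {f : Equiv.Perm G} (hf : f ∈ autPerm A.blocks) {Lset : Set G}
    (hL : IsASet A.blocks Lset) {x u : G} (hxu : x - u ∈ Lset) : f x - f u ∈ Lset := by
  obtain ⟨X, hX, hmem⟩ := exists_block A (x - u)
  have hXL : X ⊆ Lset := block_subset_of_isASet A hL hX hmem hxu
  have h1 : (u, x) ∈ arcs X := mem_arcs.mpr hmem
  exact hXL (mem_arcs.mp ((autPerm_arc_iff hf hX).mp h1))

end Aux


section Sec
variable {G : Type*} [AddCommGroup G] (U L : AddSubgroup G)

lemma secInv_mapsTo {f : Equiv.Perm G} (hfS : secInvariant f U L) {x : G} (hx : x ∈ U) :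
    f x ∈ U := by
  have h : f x ∈ (U : Set G) := by rw [← hfS.1]; exact Set.mem_image_of_mem f hx
  exact h

lemma secInv_surjOn {f : Equiv.Perm G} (hfS : secInvariant f U L) {y : G} (hy : y ∈ U) :
    ∃ x ∈ U, f x = y := by
  have hy' : y ∈ (U : Set G) := hy
  rw [← hfS.1] at hy'
  obtain ⟨x, hx, hxy⟩ := hy'
  exact ⟨x, hx, hxy⟩

lemma secInv_diff {f : Equiv.Perm G} (hfS : secInvariant f U L) {x u : G} (hu : u ∈ U)
    (h : x - u ∈ L) : f x - f u ∈ L := by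
  have hx : x ∈ (L : Set G) + {u} := mem_coset.mpr h
  have h2 := (hfS.2 u hu) ▸ Set.mem_image_of_mem f hx
  exact mem_coset.mp h2

lemma secInv_diff' {f : Equiv.Perm G} (hfS : secInvariant f U L) {x u : G} (hu : u ∈ U)
    (h : f x - f u ∈ L) : x - u ∈ L := by
  have hx : f x ∈ (L : Set G) + {f u} := mem_coset.mpr h
  rw [← hfS.2 u hu] at hx
  obtain ⟨w, hw, hwx⟩ := hx
  rw [← f.injective hwx]
  exact mem_coset.mp hw

/-- Constructor for `secInvariant` from the difference form. -/
lemma secInvariant_of {f : Equiv.Perm G}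
    (h1 : ∀ x ∈ U, f x ∈ U) (h2 : ∀ y ∈ U, ∃ x ∈ U, f x = y)
    (hc : ∀ x u : G, x - u ∈ (L : Set G) → f x - f u ∈ (L : Set G))
    (hc' : ∀ x u : G, f x - f u ∈ (L : Set G) → x - u ∈ (L : Set G)) :
    secInvariant f U L := by
  constructor
  · ext y; constructor
    · rintro ⟨x, hx, rfl⟩; exact h1 x hx
    · intro hy; obtain ⟨x, hx, hxy⟩ := h2 y hy; exact ⟨x, hx, hxy⟩
  · intro u _
    ext y; constructor
    · rintro ⟨x, hx, rfl⟩
      exact mem_coset.mpr (hc x u (mem_coset.mp hx))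
    · intro hy
      refine ⟨f.symm y, ?_, f.apply_symm_apply y⟩
      refine mem_coset.mpr (hc' _ u ?_)
      rw [f.apply_symm_apply]
      exact mem_coset.mp hy

/-- The function `U → U` induced by `f`. -/
def secMapFun {f : Equiv.Perm G} (hfS : secInvariant f U L) : U → U :=
  fun u => ⟨f ↑u, secInv_mapsTo U L hfS u.2⟩

lemma secMapFun_resp {f : Equiv.Perm G} (hfS : secInvariant f U L) :
    ∀ a b : U, (QuotientAddGroup.leftRel (L.addSubgroupOf U)).r a b →
      (QuotientAddGroup.leftRel (L.addSubgroupOf U)).r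
        (secMapFun U L hfS a) (secMapFun U L hfS b) := by
  intro a b hab
  rw [QuotientAddGroup.leftRel_apply, AddSubgroup.mem_addSubgroupOf] at *
  have hba : (↑b : G) - ↑a ∈ L := by
    simpa [neg_add_eq_sub] using hab
  have := secInv_diff U L hfS a.2 hba
  simpa [secMapFun, neg_add_eq_sub] using this

/-- The bijection of `U ⧸ L` induced by `f`. -/
noncomputable def secPermOf {f : Equiv.Perm G} (hfS : secInvariant f U L) :
    Equiv.Perm (U ⧸ L.addSubgroupOf U) := by
  refine Equiv.ofBijective
    (Quotient.map' (secMapFun U L hfS) (secMapFun_resp U L hfS)) ⟨?_, ?_⟩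
  · intro a b
    refine Quotient.inductionOn₂' a b ?_
    intro a b hab
    simp only [Quotient.map'_mk''] at hab
    rw [Quotient.eq''] at hab ⊢
    rw [QuotientAddGroup.leftRel_apply, AddSubgroup.mem_addSubgroupOf] at hab ⊢
    have h1 : f ↑b - f ↑a ∈ L := by simpa [secMapFun, neg_add_eq_sub] using hab
    have := secInv_diff' U L hfS a.2 h1
    simpa [neg_add_eq_sub] using this
  · intro b
    refine Quotient.inductionOn' b ?_
    intro b
    obtain ⟨x, hx, hxy⟩ := secInv_surjOn U L hfS b.2
    refine ⟨Quotient.mk'' ⟨x, hx⟩, ?_⟩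
    simp only [Quotient.map'_mk'']
    congr 1
    exact Subtype.ext (by simpa [secMapFun] using hxy)

lemma secPermOf_mk {f : Equiv.Perm G} (hfS : secInvariant f U L) (u : U) :
    secPermOf U L hfS (QuotientAddGroup.mk u) =
      QuotientAddGroup.mk (secMapFun U L hfS u) := rfl

lemma inducesOnSec_secPermOf {f : Equiv.Perm G} (hfS : secInvariant f U L) :
    inducesOnSec f U L (secPermOf U L hfS) := by
  intro u v h
  rw [secPermOf_mk]
  congr 1
  exact Subtype.ext h

/-- Any permutation induced by `f` on the section computes on `mk`. -/
lemma induces_mk {f : Equiv.Perm G} (hfS : secInvariant f U L)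
    {σ : Equiv.Perm (U ⧸ L.addSubgroupOf U)} (hσ : inducesOnSec f U L σ) (u : U) :
    σ (QuotientAddGroup.mk u) = QuotientAddGroup.mk (secMapFun U L hfS u) :=
  hσ u (secMapFun U L hfS u) rfl

lemma induces_inv_mk {f : Equiv.Perm G} (hfS : secInvariant f U L)
    {σ : Equiv.Perm (U ⧸ L.addSubgroupOf U)} (hσ : inducesOnSec f U L σ) (v : U)
    (hv : f⁻¹ ↑v ∈ U) :
    σ⁻¹ (QuotientAddGroup.mk v) = QuotientAddGroup.mk (⟨f⁻¹ ↑v, hv⟩ : U) := by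
  have h := hσ (⟨f⁻¹ ↑v, hv⟩ : U) v (by simp)
  rw [← h]
  simp

lemma secInv_inv_mem {f : Equiv.Perm G} (hfS : secInvariant f U L) {v : G} (hv : v ∈ U) :
    f⁻¹ v ∈ U := by
  obtain ⟨x, hx, hxy⟩ := secInv_surjOn U L hfS hv
  rw [← hxy]; simpa using hx

end Sec


section Classical0
variable {H : Type*} [AddCommGroup H]

lemma addRightPerm_apply (g x : H) : addRightPerm g x = x + g := rfl

/-- A bijection fixing `0` that normalizes the right translations is a group
automorphism. -/
lemma exists_addAut_of_normalizes (c : Equiv.Perm H) (h0 : c 0 = 0)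
    (hc : ∀ t ∈ rSet H, c * t * c⁻¹ ∈ rSet H) :
    ∃ ψ : H ≃+ H, ∀ x, c x = ψ x := by
  have key : ∀ g y : H, c (y + g) = c y + c g := by
    intro g y
    obtain ⟨m, hm⟩ := hc (addRightPerm g) ⟨g, rfl⟩
    have h1 : ∀ x, c (c⁻¹ x + g) = x + m := by
      intro x
      have h4 := congrFun (congrArg (fun (e : Equiv.Perm H) => (e : H → H)) hm) x
      simp only [Equiv.Perm.coe_mul, Function.comp_apply, addRightPerm_apply] at h4
      exact h4.symm
    have h2 : c g = m := by
      have h3 := h1 (c 0)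
      rw [show c⁻¹ (c 0) = 0 from c.symm_apply_apply 0, h0] at h3
      simpa using h3
    have := h1 (c y)
    simpa [h2] using this
  exact ⟨{ toEquiv := c, map_add' := fun a b => key b a }, fun _ => rfl⟩

end Classical0


section Count
open Set

/-- ncard of a pairwise disjoint finite union. -/
lemma ncard_biUnion_eq {α ι : Type*} (t : Finset ι) (g : ι → Set α)
    (hfin : ∀ i ∈ t, (g i).Finite)
    (hdisj : ∀ i ∈ t, ∀ j ∈ t, i ≠ j → Disjoint (g i) (g j)) :
    (⋃ i ∈ t, g i).ncard = ∑ i ∈ t, (g i).ncard := by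
  classical
  induction t using Finset.induction_on with
  | empty => simp
  | @insert a u ha ih =>
    rw [Finset.set_biUnion_insert, Finset.sum_insert ha]
    rw [Set.ncard_union_eq ?_ (hfin a (Finset.mem_insert_self a u)) ?_]
    · rw [ih (fun i hi => hfin i (Finset.mem_insert_of_mem hi))
        (fun i hi j hj hij => hdisj i (Finset.mem_insert_of_mem hi)
          j (Finset.mem_insert_of_mem hj) hij)]
    · rw [Set.disjoint_iUnion₂_right]
      intro i hi
      exact hdisj a (Finset.mem_insert_self a u) i (Finset.mem_insert_of_mem hi)
        (fun h => ha (h ▸ hi))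
    · exact Set.Finite.biUnion u.finite_toSet
        (fun i hi => hfin i (Finset.mem_insert_of_mem hi))

lemma ncard_set_prod {α β : Type*} (s : Set α) (t : Set β) :
    (s ×ˢ t).ncard = s.ncard * t.ncard := by
  rw [← Nat.card_coe_set_eq, ← Nat.card_coe_set_eq, ← Nat.card_coe_set_eq,
    ← Nat.card_prod]
  exact Nat.card_congr (Equiv.Set.prod s t)

variable {G : Type*} [AddCommGroup G] [Finite G] (B : SRing G)

/-- The structure constant count. -/
noncomputable def cnt (X Y : Set G) (z : G) : ℕ :=
  {a : G × G | a.1 ∈ X ∧ a.2 ∈ Y ∧ a.1 + a.2 = z}.ncard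

open Classical in
/-- A representative of a set. -/
noncomputable def repBlk (X : Set G) : G := if h : X.Nonempty then h.choose else 0

lemma repBlk_mem {X : Set G} (hX : X.Nonempty) : repBlk X ∈ X := by
  rw [repBlk, dif_pos hX]; exact hX.choose_spec

lemma blocks_disjoint {X Y : Set G} (hX : X ∈ B.blocks) (hY : Y ∈ B.blocks)
    (hne : X ≠ Y) : Disjoint X Y := by
  rw [Set.disjoint_left]
  intro a haX haY
  exact hne (block_eq B hX hY haX haY)

lemma cnt_const {X Y Z : Set G} (hX : X ∈ B.blocks) (hY : Y ∈ B.blocks)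
    (hZ : Z ∈ B.blocks) {z z' : G} (hz : z ∈ Z) (hz' : z' ∈ Z) :
    cnt X Y z = cnt X Y z' :=
  B.count_const X hX Y hY Z hZ z hz z' hz'

lemma cnt_sUnion {X : Set G} {C : Set (Set G)} (hC : C ⊆ B.blocks) (z : G) :
    cnt X (⋃₀ C) z = ∑ Y ∈ (Set.toFinite C).toFinset, cnt X Y z := by
  have hset : {a : G × G | a.1 ∈ X ∧ a.2 ∈ ⋃₀ C ∧ a.1 + a.2 = z}
      = ⋃ Y ∈ (Set.toFinite C).toFinset,
          {a : G × G | a.1 ∈ X ∧ a.2 ∈ Y ∧ a.1 + a.2 = z} := by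
    ext ⟨a, b⟩
    simp only [Set.mem_setOf_eq, Set.mem_sUnion, Set.mem_iUnion,
      Set.Finite.mem_toFinset, exists_prop]
    constructor
    · rintro ⟨h1, ⟨Y, hY, hbY⟩, h3⟩; exact ⟨Y, hY, h1, hbY, h3⟩
    · rintro ⟨Y, hY, h1, hbY, h3⟩; exact ⟨h1, ⟨Y, hY, hbY⟩, h3⟩
  rw [cnt, hset, ncard_biUnion_eq]
  rotate_left
  · intro i _; exact Set.toFinite _
  · intro i hi j hj hij
    rw [Set.Finite.mem_toFinset] at hi hj
    rw [Set.disjoint_left]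
    rintro ⟨a, b⟩ ⟨_, hbi, _⟩ ⟨_, hbj, _⟩
    exact Set.disjoint_left.mp (blocks_disjoint B (hC hi) (hC hj) hij) hbi hbj
  rfl

lemma cnt_eq_inter {X W : Set G} (z : G) :
    cnt X W z = (X ∩ {x | z - x ∈ W}).ncard := by
  rw [cnt]
  have hset : {a : G × G | a.1 ∈ X ∧ a.2 ∈ W ∧ a.1 + a.2 = z}
      = (fun x => (x, z - x)) '' (X ∩ {x | z - x ∈ W}) := by
    ext ⟨a, b⟩
    constructor
    · rintro ⟨h1, h2, h3⟩
      have hb : z - a = b := by rw [← h3]; abel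
      refine ⟨a, ⟨h1, show z - a ∈ W by rw [hb]; exact h2⟩, ?_⟩
      show (a, z - a) = (a, b)
      rw [hb]
    · rintro ⟨x, ⟨hx1, hx2⟩, he⟩
      have e1 : x = a := congrArg Prod.fst he
      have e2 : z - x = b := congrArg Prod.snd he
      subst e1
      refine ⟨hx1, ?_, ?_⟩
      · show b ∈ W; rw [← e2]; exact hx2
      · show x + b = z; rw [← e2]; abel
  rw [hset, Set.ncard_image_of_injective _ (fun x y h => congrArg Prod.fst h)]

lemma cnt_ASet_const {W : Set G} (hW : W ∈ B.blocks) {P : Set G}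
    (hP : IsASet B.blocks P) {Z : Set G} (hZ : Z ∈ B.blocks) {z z' : G}
    (hz : z ∈ Z) (hz' : z' ∈ Z) : cnt W P z = cnt W P z' := by
  obtain ⟨C, hC, rfl⟩ := hP
  rw [cnt_sUnion B hC, cnt_sUnion B hC]
  refine Finset.sum_congr rfl (fun Y hY => ?_)
  rw [Set.Finite.mem_toFinset] at hY
  exact cnt_const B hW (hC hY) hZ hz hz'

variable (L : AddSubgroup G)

/-- Count of pairs from `X × Y` summing to `z` modulo `L`. -/
noncomputable def bigM (X Y : Set G) (z : G) : ℕ :=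
  {a : G × G | a.1 ∈ X ∧ a.2 ∈ Y ∧ a.1 + a.2 - z ∈ (L : Set G)}.ncard

lemma coset_symm_eq (W : Set G) (z : G) :
    W ∩ {x : G | x - z ∈ (L : Set G)} = W ∩ {x : G | z - x ∈ (L : Set G)} := by
  ext x
  simp only [Set.mem_inter_iff, Set.mem_setOf_eq, SetLike.mem_coe]
  constructor
  · rintro ⟨h1, h2⟩; exact ⟨h1, by simpa [neg_sub] using neg_mem h2⟩
  · rintro ⟨h1, h2⟩; exact ⟨h1, by simpa [neg_sub] using neg_mem h2⟩

lemma bigM_formula (X Y : Set G) (hXb : X ∈ B.blocks) (hYb : Y ∈ B.blocks) (z : G) :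
    bigM L X Y z = ∑ W ∈ (Set.toFinite B.blocks).toFinset,
      cnt W (L : Set G) z * cnt X Y (repBlk W) := by
  classical
  have hset : {a : G × G | a.1 ∈ X ∧ a.2 ∈ Y ∧ a.1 + a.2 - z ∈ (L : Set G)}
      = ⋃ w ∈ (Set.toFinite {x : G | x - z ∈ (L : Set G)}).toFinset,
          {a : G × G | a.1 ∈ X ∧ a.2 ∈ Y ∧ a.1 + a.2 = w} := by
    ext ⟨a, b⟩
    simp only [Set.mem_setOf_eq, Set.mem_iUnion, Set.Finite.mem_toFinset, exists_prop]
    constructor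
    · rintro ⟨h1, h2, h3⟩; exact ⟨a + b, h3, h1, h2, rfl⟩
    · rintro ⟨w, hw, h1, h2, h3⟩; exact ⟨h1, h2, h3 ▸ hw⟩
  rw [bigM, hset, ncard_biUnion_eq]
  rotate_left
  · intro i _; exact Set.toFinite _
  · intro i _ j _ hij
    rw [Set.disjoint_left]
    rintro ⟨a, b⟩ ⟨_, _, h3⟩ ⟨_, _, h3'⟩
    exact hij (h3 ▸ h3')
  have hpart : (Set.toFinite {x : G | x - z ∈ (L : Set G)}).toFinset
      = (Set.toFinite B.blocks).toFinset.biUnion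
          (fun W => (Set.toFinite (W ∩ {x : G | x - z ∈ (L : Set G)})).toFinset) := by
    ext w
    simp only [Set.Finite.mem_toFinset, Finset.mem_biUnion, Set.mem_inter_iff,
      Set.mem_setOf_eq]
    constructor
    · intro hw
      obtain ⟨W, hWb, hwW⟩ := exists_block B w
      exact ⟨W, hWb, hwW, hw⟩
    · rintro ⟨W, _, _, hw⟩; exact hw
  have hdisjF : Set.PairwiseDisjoint (((Set.toFinite B.blocks).toFinset : Finset (Set G)) : Set (Set G))
      (fun W => (Set.toFinite (W ∩ {x : G | x - z ∈ (L : Set G)})).toFinset) := by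
    intro i hi j hj hij
    rw [Finset.mem_coe, Set.Finite.mem_toFinset] at hi hj
    simp only [Function.onFun]
    rw [Finset.disjoint_left]
    intro a hai haj
    rw [Set.Finite.mem_toFinset] at hai haj
    exact Set.disjoint_left.mp (blocks_disjoint B hi hj hij) hai.1 haj.1
  rw [hpart, Finset.sum_biUnion hdisjF]
  refine Finset.sum_congr rfl (fun W hW => ?_)
  rw [Set.Finite.mem_toFinset] at hW
  have hinner : ∀ w ∈ (Set.toFinite (W ∩ {x : G | x - z ∈ (L : Set G)})).toFinset,
      {a : G × G | a.1 ∈ X ∧ a.2 ∈ Y ∧ a.1 + a.2 = w}.ncard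
        = cnt X Y (repBlk W) := by
    intro w hw
    rw [Set.Finite.mem_toFinset] at hw
    exact cnt_const B hXb hYb hW hw.1 (repBlk_mem (B.nonempty_mem W hW))
  rw [Finset.sum_congr rfl hinner, Finset.sum_const, smul_eq_mul]
  congr 1
  rw [cnt_eq_inter, ← coset_symm_eq]
  exact ((Set.ncard_eq_toFinset_card _ (Set.toFinite _))).symm

lemma bigM_const {X Y Z : Set G} (hXb : X ∈ B.blocks) (hYb : Y ∈ B.blocks)
    (hZ : Z ∈ B.blocks) (hL : IsASet B.blocks (L : Set G)) {z z' : G}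
    (hz : z ∈ Z) (hz' : z' ∈ Z) : bigM L X Y z = bigM L X Y z' := by
  rw [bigM_formula B L X Y hXb hYb, bigM_formula B L X Y hXb hYb]
  refine Finset.sum_congr rfl (fun W hW => ?_)
  rw [Set.Finite.mem_toFinset] at hW
  rw [cnt_ASet_const B hW hL hZ hz hz']

end Count


section QuotCons
open Set

variable {G : Type*} [AddCommGroup G] [Finite G] (B : SRing G) (U L : AddSubgroup G)

/-- The image in the section `U/L` of a subset `X ⊆ U` of `G`. -/
def mkb (X : Set G) : Set (U ⧸ L.addSubgroupOf U) :=
  (QuotientAddGroup.mk : U → U ⧸ L.addSubgroupOf U) '' {u : U | (u : G) ∈ X}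

lemma mem_secBlocks {Bl : Set (Set G)} {Z : Set (U ⧸ L.addSubgroupOf U)} :
    Z ∈ secBlocks Bl U L ↔ ∃ X ∈ Bl, X ⊆ (U : Set G) ∧ Z = mkb U L X := Iff.rfl

lemma sum_block_closed {X Y Z : Set G} (hX : X ∈ B.blocks) (hY : Y ∈ B.blocks)
    (hZ : Z ∈ B.blocks) {z z' : G} (hz : z ∈ Z) (hz' : z' ∈ Z)
    (h : ∃ x ∈ X, ∃ y ∈ Y, x + y = z) : ∃ x ∈ X, ∃ y ∈ Y, x + y = z' := by
  have h1 : 0 < cnt X Y z := by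
    rw [cnt, Set.ncard_pos (Set.toFinite _)]
    obtain ⟨x, hx, y, hy, hxy⟩ := h
    exact ⟨(x, y), hx, hy, hxy⟩
  rw [cnt_const B hX hY hZ hz hz'] at h1
  rw [cnt, Set.ncard_pos (Set.toFinite _)] at h1
  obtain ⟨⟨x, y⟩, hx, hy, hxy⟩ := h1
  exact ⟨x, hx, y, hy, hxy⟩

lemma diff_L_closed (hL : IsASet B.blocks (L : Set G)) {X Z : Set G}
    (hX : X ∈ B.blocks) (hZ : Z ∈ B.blocks) {g g' : G} (hg : g ∈ Z) (hg' : g' ∈ Z)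
    (h : ∃ a ∈ X, g - a ∈ L) : ∃ a ∈ X, g' - a ∈ L := by
  obtain ⟨a, ha, hl⟩ := h
  obtain ⟨Yl, hYl, hmem⟩ := exists_block B (g - a)
  have hYlL : Yl ⊆ (L : Set G) := block_subset_of_isASet B hL hYl hmem hl
  have h2 : ∃ x ∈ X, ∃ y ∈ Yl, x + y = g := ⟨a, ha, g - a, hmem, by abel⟩
  obtain ⟨x, hx, y, hy, hxy⟩ := sum_block_closed B hX hYl hZ hg hg' h2
  refine ⟨x, hx, ?_⟩
  have : g' - x = y := by rw [← hxy]; abel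
  rw [this]
  exact hYlL hy

lemma secBlock_subset (hU : IsASet B.blocks (U : Set G))
    (hL : IsASet B.blocks (L : Set G)) {X X' : Set G}
    (hX : X ∈ B.blocks) (hX' : X' ∈ B.blocks) (hXU : X ⊆ (U : Set G))
    {u' : U} (hu' : (↑u' : G) ∈ X') (hd : ∃ a ∈ X, (↑u' : G) - a ∈ L) :
    mkb U L X' ⊆ mkb U L X := by
  rintro s ⟨v', hv', rfl⟩
  obtain ⟨a, haX, hdl⟩ := diff_L_closed B L hL hX hX' hu' hv' hd
  refine ⟨⟨a, hXU haX⟩, haX, ?_⟩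
  rw [QuotientAddGroup.eq, AddSubgroup.mem_addSubgroupOf]
  have : ((-(⟨a, hXU haX⟩ : U) + v' : U) : G) = (↑v' : G) - a := by
    push_cast; abel
  rw [this]
  exact hdl

lemma secBlock_eq (hU : IsASet B.blocks (U : Set G))
    (hL : IsASet B.blocks (L : Set G)) {X X' : Set G}
    (hX : X ∈ B.blocks) (hX' : X' ∈ B.blocks) (hXU : X ⊆ (U : Set G))
    (hX'U : X' ⊆ (U : Set G)) {u u' : U} (hu : (↑u : G) ∈ X) (hu' : (↑u' : G) ∈ X')
    (he : (QuotientAddGroup.mk u : U ⧸ L.addSubgroupOf U) = QuotientAddGroup.mk u') :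
    mkb U L X = mkb U L X' := by
  rw [QuotientAddGroup.eq, AddSubgroup.mem_addSubgroupOf] at he
  have h1 : (↑u' : G) - ↑u ∈ L := by
    have : ((-u + u' : U) : G) = (↑u' : G) - ↑u := by push_cast; abel
    rwa [this] at he
  have h2 : (↑u : G) - ↑u' ∈ L := by simpa [neg_sub] using neg_mem h1
  refine Set.Subset.antisymm ?_ ?_
  · exact secBlock_subset B U L hU hL hX' hX hX'U hu ⟨↑u', hu', h2⟩
  · exact secBlock_subset B U L hU hL hX hX' hXU hu' ⟨↑u, hu, h1⟩

lemma cnt_L_pos {X : Set G} (hXb : X ∈ B.blocks) :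
    0 < cnt X (L : Set G) (repBlk X) := by
  rw [cnt_eq_inter, Set.ncard_pos (Set.toFinite _)]
  refine ⟨repBlk X, repBlk_mem (B.nonempty_mem X hXb), ?_⟩
  show repBlk X - repBlk X ∈ (L : Set G)
  rw [sub_self]
  simpa using zero_mem L

/-- The key fibering identity relating counts in `G` and in the section. -/
lemma fiber_count (hLU : L ≤ U) (hL : IsASet B.blocks (L : Set G)) {X Y : Set G}
    (hXb : X ∈ B.blocks) (hYb : Y ∈ B.blocks) (hXU : X ⊆ (U : Set G))
    (hYU : Y ⊆ (U : Set G)) (w0 : U) :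
    {a : (U ⧸ L.addSubgroupOf U) × (U ⧸ L.addSubgroupOf U) |
        a.1 ∈ mkb U L X ∧ a.2 ∈ mkb U L Y ∧ a.1 + a.2 = QuotientAddGroup.mk w0}.ncard
      * (cnt X (L : Set G) (repBlk X) * cnt Y (L : Set G) (repBlk Y))
      = bigM L X Y ↑w0 := by
  classical
  set Q := U ⧸ L.addSubgroupOf U
  set mkg : G → Q := fun x => if h : x ∈ U then QuotientAddGroup.mk ⟨x, h⟩ else 0
    with hmkg
  set Mset := {a : G × G | a.1 ∈ X ∧ a.2 ∈ Y ∧ a.1 + a.2 - ↑w0 ∈ (L : Set G)}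
    with hMset
  set Nset := {a : Q × Q |
      a.1 ∈ mkb U L X ∧ a.2 ∈ mkb U L Y ∧ a.1 + a.2 = QuotientAddGroup.mk w0}
    with hNset
  have hmaps : ∀ p ∈ (Set.toFinite Mset).toFinset,
      (mkg p.1, mkg p.2) ∈ (Set.toFinite Nset).toFinset := by
    rintro ⟨a, b⟩ hp
    rw [Set.Finite.mem_toFinset] at hp ⊢
    obtain ⟨h1, h2, h3⟩ := hp
    have haU : a ∈ U := hXU h1
    have hbU : b ∈ U := hYU h2
    have e1 : mkg a = QuotientAddGroup.mk ⟨a, haU⟩ := dif_pos haU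
    have e2 : mkg b = QuotientAddGroup.mk ⟨b, hbU⟩ := dif_pos hbU
    refine ⟨by rw [e1]; exact ⟨⟨a, haU⟩, h1, rfl⟩, by rw [e2]; exact ⟨⟨b, hbU⟩, h2, rfl⟩, ?_⟩
    show mkg a + mkg b = _
    rw [e1, e2, ← QuotientAddGroup.mk_add, QuotientAddGroup.eq, AddSubgroup.mem_addSubgroupOf]
    have : ((-(⟨a, haU⟩ + ⟨b, hbU⟩ : U) + w0 : U) : G) = -(a + b - ↑w0) := by
      push_cast; abel
    rw [this]
    exact neg_mem h3
  have hcard := Finset.card_eq_sum_card_fiberwise hmaps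
  have hfib : ∀ q ∈ (Set.toFinite Nset).toFinset,
      ((Set.toFinite Mset).toFinset.filter (fun p => (mkg p.1, mkg p.2) = q)).card
        = cnt X (L : Set G) (repBlk X) * cnt Y (L : Set G) (repBlk Y) := by
    rintro ⟨q1, q2⟩ hq
    rw [Set.Finite.mem_toFinset] at hq
    obtain ⟨hq1, hq2, hq3⟩ := hq
    obtain ⟨u1, hu1, he1⟩ := hq1
    obtain ⟨u2, hu2, he2⟩ := hq2
    dsimp only at hq3 he1 he2 hu1 hu2
    have hfeq : (Set.toFinite Mset).toFinset.filter (fun p => (mkg p.1, mkg p.2) = (q1, q2))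
        = (Set.toFinite ((X ∩ {x : G | x - ↑u1 ∈ (L : Set G)}) ×ˢ
            (Y ∩ {x : G | x - ↑u2 ∈ (L : Set G)}))).toFinset := by
      ext ⟨a, b⟩
      rw [Finset.mem_filter, Set.Finite.mem_toFinset, Set.Finite.mem_toFinset]
      constructor
      · rintro ⟨⟨h1, h2, h3⟩, hFq⟩
        have haU : a ∈ U := hXU h1
        have hbU : b ∈ U := hYU h2
        have e1 : mkg a = QuotientAddGroup.mk ⟨a, haU⟩ := dif_pos haU
        have e2 : mkg b = QuotientAddGroup.mk ⟨b, hbU⟩ := dif_pos hbU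
        have hFq1 : mkg a = q1 := congrArg Prod.fst hFq
        have hFq2 : mkg b = q2 := congrArg Prod.snd hFq
        rw [e1, ← he1, QuotientAddGroup.eq, AddSubgroup.mem_addSubgroupOf] at hFq1
        rw [e2, ← he2, QuotientAddGroup.eq, AddSubgroup.mem_addSubgroupOf] at hFq2
        constructor
        · refine ⟨h1, ?_⟩
          have : ((-(⟨a, haU⟩ : U) + u1 : U) : G) = -(a - ↑u1) := by push_cast; abel
          rw [this] at hFq1
          simpa using neg_mem hFq1
        · refine ⟨h2, ?_⟩
          have : ((-(⟨b, hbU⟩ : U) + u2 : U) : G) = -(b - ↑u2) := by push_cast; abel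
          rw [this] at hFq2
          simpa using neg_mem hFq2
      · rintro ⟨⟨h1, hl1⟩, ⟨h2, hl2⟩⟩
        have hl1' : a - ↑u1 ∈ L := hl1
        have hl2' : b - ↑u2 ∈ L := hl2
        have haU : a ∈ U := hXU h1
        have hbU : b ∈ U := hYU h2
        have e1 : mkg a = QuotientAddGroup.mk ⟨a, haU⟩ := dif_pos haU
        have e2 : mkg b = QuotientAddGroup.mk ⟨b, hbU⟩ := dif_pos hbU
        have hsum : (↑u1 : G) + ↑u2 - ↑w0 ∈ L := by
          have h12 : (QuotientAddGroup.mk (u1 + u2) : Q) = QuotientAddGroup.mk w0 := by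
            rw [QuotientAddGroup.mk_add, he1, he2]; exact hq3
          rw [QuotientAddGroup.eq, AddSubgroup.mem_addSubgroupOf] at h12
          have : ((-(u1 + u2) + w0 : U) : G) = -((↑u1 : G) + ↑u2 - ↑w0) := by
            push_cast; abel
          rw [this] at h12
          simpa using neg_mem h12
        constructor
        · refine ⟨h1, h2, ?_⟩
          have hdec : a + b - ↑w0
              = (a - ↑u1) + ((b - ↑u2) + ((↑u1 : G) + ↑u2 - ↑w0)) := by abel
          rw [hdec]
          exact add_mem hl1' (add_mem hl2' hsum)
        · have g1 : mkg a = q1 := by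
            rw [e1, ← he1, QuotientAddGroup.eq, AddSubgroup.mem_addSubgroupOf]
            have : ((-(⟨a, haU⟩ : U) + u1 : U) : G) = -(a - ↑u1) := by push_cast; abel
            rw [this]
            exact neg_mem hl1'
          have g2 : mkg b = q2 := by
            rw [e2, ← he2, QuotientAddGroup.eq, AddSubgroup.mem_addSubgroupOf]
            have : ((-(⟨b, hbU⟩ : U) + u2 : U) : G) = -(b - ↑u2) := by push_cast; abel
            rw [this]
            exact neg_mem hl2'
          rw [Prod.mk.injEq]
          exact ⟨g1, g2⟩
    rw [hfeq, ← Set.ncard_eq_toFinset_card _ (Set.toFinite _), ncard_set_prod]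
    have hc1 : cnt X (L : Set G) ↑u1 = cnt X (L : Set G) (repBlk X) :=
      cnt_ASet_const B hXb hL hXb hu1 (repBlk_mem (B.nonempty_mem X hXb))
    have hc2 : cnt Y (L : Set G) ↑u2 = cnt Y (L : Set G) (repBlk Y) :=
      cnt_ASet_const B hYb hL hYb hu2 (repBlk_mem (B.nonempty_mem Y hYb))
    congr 1
    · rw [← hc1, cnt_eq_inter]
      exact congrArg Set.ncard (coset_symm_eq L X ↑u1)
    · rw [← hc2, cnt_eq_inter]
      exact congrArg Set.ncard (coset_symm_eq L Y ↑u2)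
  rw [Finset.sum_congr rfl hfib, Finset.sum_const, smul_eq_mul] at hcard
  have hM : bigM L X Y (↑w0 : G) = Mset.ncard := rfl
  rw [hM, Set.ncard_eq_toFinset_card _ (Set.toFinite Mset), hcard,
    Set.ncard_eq_toFinset_card _ (Set.toFinite Nset)]

/-- The quotient S-ring `B_{U/L}`. -/
noncomputable def quotSRing (hLU : L ≤ U) (hU : IsASet B.blocks (U : Set G))
    (hL : IsASet B.blocks (L : Set G)) : SRing (U ⧸ L.addSubgroupOf U) where
  blocks := secBlocks B.blocks U L
  nonempty_mem := by
    rintro Z ⟨X, hX, hXU, rfl⟩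
    obtain ⟨x, hx⟩ := B.nonempty_mem X hX
    exact ⟨QuotientAddGroup.mk ⟨x, hXU hx⟩, ⟨x, hXU hx⟩, hx, rfl⟩
  existsUnique_mem := by
    intro s
    induction s using QuotientAddGroup.induction_on with | H u =>
    obtain ⟨X, hX, hu⟩ := exists_block B (↑u : G)
    have hXU : X ⊆ (U : Set G) := block_subset_of_isASet B hU hX hu u.2
    refine ⟨mkb U L X, ⟨⟨X, hX, hXU, rfl⟩, ⟨u, hu, rfl⟩⟩, ?_⟩
    rintro Z ⟨⟨X', hX', hX'U, rfl⟩, ⟨u', hu', he⟩⟩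
    exact secBlock_eq B U L hU hL hX' hX hX'U hXU hu' hu he
  zero_mem := by
    refine ⟨{0}, B.zero_mem, Set.singleton_subset_iff.mpr (zero_mem U), ?_⟩
    ext s
    constructor
    · intro hs
      simp only [Set.mem_singleton_iff] at hs
      subst hs
      exact ⟨0, by simp, by simp⟩
    · rintro ⟨u, hu, rfl⟩
      have : u = 0 := Subtype.ext (by simpa using hu)
      simp [this]
  neg_mem := by
    rintro Z ⟨X, hX, hXU, rfl⟩
    refine ⟨-X, B.neg_mem X hX, ?_, ?_⟩
    · intro x hx
      have h1 : -x ∈ X := by simpa using hx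
      have h2 := hXU h1
      simpa using neg_mem h2
    · ext s
      constructor
      · intro hs
        have hs' : -s ∈ (QuotientAddGroup.mk '' {u : U | (↑u : G) ∈ X} :
            Set (U ⧸ L.addSubgroupOf U)) := Set.mem_neg.mp hs
        obtain ⟨u, hu, he⟩ := hs'
        refine ⟨-u, ?_, ?_⟩
        · show ((-u : U) : G) ∈ -X
          rw [Set.mem_neg]
          have hcoe : -((-u : U) : G) = (↑u : G) := by push_cast; abel
          rw [hcoe]
          exact hu
        · rw [QuotientAddGroup.mk_neg, he, neg_neg]
      · rintro ⟨u, hu, rfl⟩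
        rw [Set.mem_neg]
        have hu' : -(↑u : G) ∈ X := Set.mem_neg.mp hu
        refine ⟨-u, ?_, ?_⟩
        · show ((-u : U) : G) ∈ X
          have hcoe : ((-u : U) : G) = -(↑u : G) := by push_cast; abel
          rw [hcoe]
          exact hu'
        · rw [QuotientAddGroup.mk_neg]
  count_const := by
    rintro Xb ⟨X, hXb, hXU, rfl⟩ Yb ⟨Y, hYb, hYU, rfl⟩ Zb ⟨Z, hZb, hZU, rfl⟩ z hz z' hz'
    obtain ⟨w0, hw0, rfl⟩ := hz
    obtain ⟨w0', hw0', rfl⟩ := hz'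
    have h1 := fiber_count B U L hLU hL hXb hYb hXU hYU w0
    have h2 := fiber_count B U L hLU hL hXb hYb hXU hYU w0'
    have h3 : bigM L X Y ↑w0 = bigM L X Y ↑w0' :=
      bigM_const B L hXb hYb hZb hL hw0 hw0'
    have hpos : 0 < cnt X (L : Set G) (repBlk X) * cnt Y (L : Set G) (repBlk Y) :=
      Nat.mul_pos (cnt_L_pos B L hXb) (cnt_L_pos B L hYb)
    exact Nat.eq_of_mul_eq_mul_right hpos (h1.trans (h3.trans h2.symm))

end QuotCons


section Main
open Set

variable {G : Type*} [AddCommGroup G]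

lemma arc_iff_of_pmap {f : Equiv.Perm G} {X Y : Set G} (h : pmap f (arcs X) = arcs Y)
    (a b : G) : (a, b) ∈ arcs X ↔ (f a, f b) ∈ arcs Y := by
  constructor
  · intro hab; rw [← h]; exact ⟨(a, b), hab, rfl⟩
  · intro hab; rw [← h] at hab; exact mem_pmap_iff.mp hab

lemma image_of_pmap_arcs {f : Equiv.Perm G} (hf0 : f 0 = 0) {X Y : Set G}
    (h : pmap f (arcs X) = arcs Y) : Y = f '' X := by
  ext y
  constructor
  · intro hy
    have h1 : ((0 : G), y) ∈ arcs Y := mem_arcs.mpr (by simpa using hy)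
    rw [← h] at h1
    obtain ⟨⟨c, d⟩, hcd, he⟩ := h1
    have e1 : f c = 0 := congrArg Prod.fst he
    have e2 : f d = y := congrArg Prod.snd he
    have hc : c = 0 := f.injective (by rw [e1, hf0])
    subst hc
    exact ⟨d, by simpa [mem_arcs] using hcd, e2⟩
  · rintro ⟨x, hx, rfl⟩
    have h1 : ((0 : G), x) ∈ arcs X := mem_arcs.mpr (by simpa using hx)
    have h2 := (arc_iff_of_pmap h 0 x).mp h1
    rw [hf0] at h2
    simpa [mem_arcs] using h2

lemma add_singleton_zero (P : Set G) : P + {(0 : G)} = P := by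
  rw [Set.add_singleton]
  simp

lemma isaset_image {f : Equiv.Perm G} {Bl1 Bl2 : Set (Set G)}
    (himg : ∀ X ∈ Bl1, f '' X ∈ Bl2) {P : Set G} (hP : IsASet Bl1 P) :
    IsASet Bl2 (f '' P) := by
  obtain ⟨C, hC, rfl⟩ := hP
  refine ⟨(f '' ·) '' C, ?_, ?_⟩
  · rintro _ ⟨X, hX, rfl⟩; exact himg X (hC hX)
  · ext y
    simp only [Set.sUnion_image, Set.mem_iUnion, Set.mem_image, Set.mem_sUnion]
    constructor
    · rintro ⟨x, ⟨X, hX, hxX⟩, rfl⟩; exact ⟨X, hX, x, hxX, rfl⟩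
    · rintro ⟨X, hX, x, hxX, rfl⟩; exact ⟨x, ⟨X, hX, hxX⟩, rfl⟩

lemma aut_secInvariant (A : SRing G) (U L : AddSubgroup G) {γ : Equiv.Perm G}
    (hγ : γ ∈ autPerm A.blocks) (hγ0 : γ 0 = 0) (hU : IsASet A.blocks (U : Set G))
    (hL : IsASet A.blocks (L : Set G)) : secInvariant γ U L := by
  have hγinv0 : γ⁻¹ 0 = 0 := by
    conv_lhs => rw [← hγ0]
    exact γ.symm_apply_apply 0
  refine secInvariant_of U L ?_ ?_ ?_ ?_
  · intro x hx
    obtain ⟨X, hX, hxX⟩ := exists_block A x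
    have hXU : X ⊆ (U : Set G) := block_subset_of_isASet A hU hX hxX hx
    have himg := autPerm_image_block A hγ hγ0 hX
    exact hXU (himg ▸ Set.mem_image_of_mem γ hxX)
  · intro y hy
    refine ⟨γ⁻¹ y, ?_, γ.apply_symm_apply y⟩
    obtain ⟨X, hX, hxX⟩ := exists_block A y
    have hXU : X ⊆ (U : Set G) := block_subset_of_isASet A hU hX hxX hy
    have himg := autPerm_image_block A (autPerm_inv hγ) hγinv0 hX
    exact hXU (himg ▸ ⟨y, hxX, rfl⟩)
  · exact fun x u h => autPerm_diff A hγ hL h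
  · intro x u h
    have h2 := autPerm_diff A (autPerm_inv hγ) hL h
    simpa using h2

variable (U L : AddSubgroup G)

lemma pmap_sec {f : Equiv.Perm G} (hfS : secInvariant f U L)
    {σ : Equiv.Perm (U ⧸ L.addSubgroupOf U)} (hσ : inducesOnSec f U L σ)
    {X Y : Set G} (harc : pmap f (arcs X) = arcs Y) :
    pmap σ (arcs (mkb U L X)) = arcs (mkb U L Y) := by
  have hiff := arc_iff_of_pmap harc
  apply Set.Subset.antisymm
  · rintro r ⟨⟨s, t⟩, hst, rfl⟩
    obtain ⟨u, rfl⟩ := QuotientAddGroup.mk_surjective s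
    obtain ⟨x, hxX, hx⟩ := mem_arcs.mp hst
    have ht : t = QuotientAddGroup.mk (x + u) := by
      rw [QuotientAddGroup.mk_add, hx]; abel
    subst ht
    show (σ (QuotientAddGroup.mk u), σ (QuotientAddGroup.mk (x + u))) ∈ arcs (mkb U L Y)
    rw [induces_mk U L hfS hσ, induces_mk U L hfS hσ, mem_arcs, ← QuotientAddGroup.mk_sub]
    refine ⟨secMapFun U L hfS (x + u) - secMapFun U L hfS u, ?_, rfl⟩
    show f ((x + u : U) : G) - f (↑u : G) ∈ Y
    have harcX : ((↑u : G), ((x + u : U) : G)) ∈ arcs X := by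
      rw [mem_arcs]
      have : ((x + u : U) : G) - ↑u = (↑x : G) := by push_cast; abel
      rw [this]
      exact hxX
    exact mem_arcs.mp ((hiff _ _).mp harcX)
  · intro r hr
    obtain ⟨s', t'⟩ := r
    obtain ⟨v, rfl⟩ := QuotientAddGroup.mk_surjective s'
    obtain ⟨y, hyY, hy⟩ := mem_arcs.mp hr
    have ht : t' = QuotientAddGroup.mk (y + v) := by
      rw [QuotientAddGroup.mk_add, hy]; abel
    subst ht
    have hfv : f⁻¹ (↑v : G) ∈ U := secInv_inv_mem U L hfS v.2
    have hfyv : f⁻¹ ((y + v : U) : G) ∈ U := secInv_inv_mem U L hfS (y + v).2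
    have harcX : (f⁻¹ (↑v : G), f⁻¹ ((y + v : U) : G)) ∈ arcs X := by
      apply (hiff _ _).mpr
      simp only [show ∀ z, f (f⁻¹ z) = z from fun z => f.apply_symm_apply z]
      rw [mem_arcs]
      have : ((y + v : U) : G) - ↑v = (↑y : G) := by push_cast; abel
      rw [this]
      exact hyY
    refine ⟨(QuotientAddGroup.mk ⟨f⁻¹ ↑v, hfv⟩, QuotientAddGroup.mk ⟨f⁻¹ ((y + v : U) : G), hfyv⟩),
      ?_, ?_⟩
    · rw [mem_arcs, ← QuotientAddGroup.mk_sub]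
      refine ⟨(⟨f⁻¹ ((y + v : U) : G), hfyv⟩ : U) - ⟨f⁻¹ ↑v, hfv⟩, ?_, rfl⟩
      show (((⟨f⁻¹ ((y + v : U) : G), hfyv⟩ : U) - ⟨f⁻¹ ↑v, hfv⟩ : U) : G) ∈ X
      have hco : (((⟨f⁻¹ ((y + v : U) : G), hfyv⟩ : U) - ⟨f⁻¹ ↑v, hfv⟩ : U) : G)
          = f⁻¹ ((y + v : U) : G) - f⁻¹ (↑v : G) := by push_cast; abel
      rw [hco]
      exact mem_arcs.mp harcX
    · have g1 : σ (QuotientAddGroup.mk ⟨f⁻¹ ↑v, hfv⟩) = QuotientAddGroup.mk v :=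
        hσ _ v (by simp)
      have g2 : σ (QuotientAddGroup.mk ⟨f⁻¹ ((y + v : U) : G), hfyv⟩)
          = QuotientAddGroup.mk (y + v) := hσ _ (y + v) (by simp)
      rw [Prod.mk.injEq]
      exact ⟨g1, g2⟩

end Main

/-- Let `A` be a schurian S-ring over a finite abelian group `G` and
`S = U/L` an `A`-section such that (1) `A` is CI and `S_r ⊴ Aut(A)^S`, or (2) `A_S` is
a normal CI-S-ring. Then for every `f ∈ iso_e(A)` with `S^f = S`, the induced
bijection `f^S` is a group automorphism of `S`; in particular `f^S = id_S` whenever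
`f^S` fixes pointwise a generating set of `S`. -/
theorem statement3 (G : Type*) [AddCommGroup G] [Finite G]
    (A : SRing G) (hSch : IsSchurianBlocks A.blocks)
    (U L : AddSubgroup G) (hU : IsASubgroup A.blocks U) (hL : IsASubgroup A.blocks L)
    (hLU : L ≤ U)
    (hcond :
      (IsCIBlocks A.blocks ∧
        rSet (↥U ⧸ L.addSubgroupOf U) ⊆ secPerms (autPerm A.blocks) U L ∧
        normalizesInto (secPerms (autPerm A.blocks) U L)
          (rSet (↥U ⧸ L.addSubgroupOf U))) ∨
      (IsNormalBlocks (secBlocks A.blocks U L) ∧ IsCIBlocks (secBlocks A.blocks U L)))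
    (f : Equiv.Perm G) (hf : f ∈ isoPerm A.blocks) (hf0 : f 0 = 0)
    (hfS : secInvariant f U L)
    (σ : Equiv.Perm (↥U ⧸ L.addSubgroupOf U)) (hσ : inducesOnSec f U L σ) :
    (∃ ψ : AddAut (↥U ⧸ L.addSubgroupOf U), ∀ x, σ x = ψ x) ∧
      ∀ T : Set (↥U ⧸ L.addSubgroupOf U), AddSubgroup.closure T = ⊤ →
        (∀ t ∈ T, σ t = t) → σ = 1 := by
  classical
  have hUA : IsASet A.blocks (U : Set G) := hU
  have hLA : IsASet A.blocks (L : Set G) := hL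
  have hfL : ⇑f '' (L : Set G) = (L : Set G) := by
    have h := hfS.2 0 (zero_mem U)
    rw [hf0] at h
    rwa [add_singleton_zero] at h
  have hσ0 : σ 0 = 0 := by
    have h := hσ 0 0 (by simpa using hf0)
    simpa using h
  have main : ∃ ψ : (↥U ⧸ L.addSubgroupOf U) ≃+ (↥U ⧸ L.addSubgroupOf U),
      ∀ x, σ x = ψ x := by
    rcases hcond with ⟨hCI, hsub, hnorm⟩ | ⟨hNorm, hCI⟩
    · -- Case (1): A is CI and S_r is normal in Aut(A)^S
      have hfiso := hf
      rw [hCI] at hfiso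
      obtain ⟨γ, hγ, φ, hφ⟩ := hfiso
      have hγ0 : γ 0 = 0 := by
        have h := hφ 0
        rw [hf0] at h
        have h2 : φ (γ 0) = φ 0 := by rw [← h]; simp
        exact φ.injective h2
      have hγS : secInvariant γ U L := aut_secInvariant A U L hγ hγ0 hUA hLA
      set σγ := secPermOf U L hγS with hσγdef
      have hσγmem : σγ ∈ secPerms (autPerm A.blocks) U L :=
        ⟨γ, hγ, hγS, inducesOnSec_secPermOf U L hγS⟩
      have hσγ0 : σγ 0 = 0 := by
        have h : σγ (QuotientAddGroup.mk (0 : U))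
            = QuotientAddGroup.mk (secMapFun U L hγS 0) := secPermOf_mk U L hγS 0
        have h2 : secMapFun U L hγS 0 = 0 := Subtype.ext (by simpa [secMapFun] using hγ0)
        rw [h2] at h
        simpa using h
      obtain ⟨eγ, heγ⟩ := exists_addAut_of_normalizes σγ hσγ0
        (fun t ht => hnorm σγ hσγmem t ht)
      have hφf : ∀ x, φ x = f (γ⁻¹ x) := by
        intro x
        have h := hφ (γ⁻¹ x)
        rw [show γ (γ⁻¹ x) = x from γ.apply_symm_apply x] at h
        exact h.symm
      have hγmem : ∀ x ∈ U, γ x ∈ U := fun x hx => secInv_mapsTo U L hγS hx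
      have hγinvmem : ∀ x ∈ U, γ⁻¹ x ∈ U := fun x hx => secInv_inv_mem U L hγS hx
      have hfmem : ∀ x ∈ U, f x ∈ U := fun x hx => secInv_mapsTo U L hfS hx
      have hfinvmem : ∀ x ∈ U, f⁻¹ x ∈ U := fun x hx => secInv_inv_mem U L hfS hx
      have hγinv0 : γ⁻¹ 0 = 0 := by
        conv_lhs => rw [← hγ0]
        exact γ.symm_apply_apply 0
      -- φ maps L into L, and reflects it
      have hφL : ∀ l : G, l ∈ L → φ l ∈ L := by
        intro l hl
        rw [hφf]
        have h1 : γ⁻¹ l - γ⁻¹ 0 ∈ (L : Set G) :=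
          autPerm_diff A (autPerm_inv hγ) hLA (by simpa using hl)
        rw [hγinv0, sub_zero] at h1
        have h2 := secInv_diff U L hfS (zero_mem U) (x := γ⁻¹ l) (by simpa using h1)
        rw [hf0, sub_zero] at h2
        exact h2
      have hφL' : ∀ l : G, φ l ∈ L → l ∈ L := by
        intro l hl
        rw [hφf] at hl
        have h2 := secInv_diff' U L hfS (zero_mem U) (x := γ⁻¹ l)
          (by rw [hf0, sub_zero]; exact hl)
        rw [sub_zero] at h2
        have h3 : γ (γ⁻¹ l) - γ 0 ∈ (L : Set G) := autPerm_diff A hγ hLA (by simpa using h2)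
        rw [show γ (γ⁻¹ l) = l from γ.apply_symm_apply l, hγ0, sub_zero] at h3
        exact h3
      have hφS : secInvariant (φ.toEquiv : Equiv.Perm G) U L := by
        refine secInvariant_of U L ?_ ?_ ?_ ?_
        · intro x hx
          show φ x ∈ U
          rw [hφf]
          exact hfmem _ (hγinvmem _ hx)
        · intro y hy
          refine ⟨γ (f⁻¹ y), hγmem _ (hfinvmem _ hy), ?_⟩
          show φ (γ (f⁻¹ y)) = y
          rw [← hφ (f⁻¹ y)]
          exact f.apply_symm_apply y
        · intro x u h
          show φ x - φ u ∈ (L : Set G)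
          rw [← map_sub]
          exact hφL _ h
        · intro x u h
          have h2 : φ (x - u) ∈ L := by rw [map_sub]; exact h
          exact hφL' _ h2
      set σφ := secPermOf U L hφS with hσφdef
      have hφadd : ∀ s t : ↥U ⧸ L.addSubgroupOf U, σφ (s + t) = σφ s + σφ t := by
        intro s t
        obtain ⟨a, rfl⟩ := QuotientAddGroup.mk_surjective s
        obtain ⟨b, rfl⟩ := QuotientAddGroup.mk_surjective t
        rw [← QuotientAddGroup.mk_add, secPermOf_mk, secPermOf_mk, secPermOf_mk,
          ← QuotientAddGroup.mk_add]
        congr 1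
        refine Subtype.ext ?_
        show φ.toEquiv ((a + b : U) : G) = φ.toEquiv (↑a : G) + φ.toEquiv (↑b : G)
        push_cast
        exact map_add φ ↑a ↑b
      set eφ : (↥U ⧸ L.addSubgroupOf U) ≃+ (↥U ⧸ L.addSubgroupOf U) :=
        { toEquiv := σφ, map_add' := hφadd } with heφdef
      refine ⟨eγ.trans eφ, ?_⟩
      intro x
      obtain ⟨u, rfl⟩ := QuotientAddGroup.mk_surjective x
      have h1 : σ (QuotientAddGroup.mk u) = QuotientAddGroup.mk (secMapFun U L hfS u) :=
        induces_mk U L hfS hσ u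
      have h2 : (eγ.trans eφ) (QuotientAddGroup.mk u) = σφ (σγ (QuotientAddGroup.mk u)) := by
        show eφ (eγ _) = _
        rw [← heγ _]
        rfl
      rw [h1, h2, secPermOf_mk, secPermOf_mk]
      congr 1
      refine Subtype.ext ?_
      show f (↑u : G) = φ.toEquiv ((secMapFun U L hγS u : U) : G)
      exact hφ ↑u
    · -- Case (2): A_S is a normal CI-S-ring
      obtain ⟨Bimg, hAB⟩ := hf
      have himg : ∀ X ∈ A.blocks, f '' X ∈ Bimg.blocks ∧ pmap f (arcs X) = arcs (f '' X) := by
        intro X hX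
        have hmem : pmap f (arcs X) ∈ {R | ∃ Y ∈ Bimg.blocks, R = arcs Y} := by
          rw [← hAB]; exact ⟨X, hX, rfl⟩
        obtain ⟨Y, hY, hYe⟩ := hmem
        have hYX : Y = f '' X := image_of_pmap_arcs hf0 hYe
        subst hYX
        exact ⟨hY, hYe⟩
      have hrev : ∀ Y ∈ Bimg.blocks, ∃ X ∈ A.blocks, Y = f '' X := by
        intro Y hY
        have hmem : arcs Y ∈ {R | ∃ X ∈ A.blocks, R = pmap f (arcs X)} := by
          rw [hAB]; exact ⟨Y, hY, rfl⟩
        obtain ⟨X, hX, hXe⟩ := hmem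
        exact ⟨X, hX, image_of_pmap_arcs hf0 hXe.symm⟩
      have hUB : IsASet Bimg.blocks (U : Set G) := by
        have h := isaset_image (fun X hX => (himg X hX).1) hUA
        rwa [hfS.1] at h
      have hLB : IsASet Bimg.blocks (L : Set G) := by
        have h := isaset_image (fun X hX => (himg X hX).1) hLA
        rwa [hfL] at h
      have hσiso : σ ∈ isoPerm (secBlocks A.blocks U L) := by
        refine ⟨quotSRing Bimg U L hLU hUB hLB, ?_⟩
        ext R
        constructor
        · rintro ⟨Z, ⟨X, hX, hXU, rfl⟩, rfl⟩
          refine ⟨mkb U L (f '' X), ⟨f '' X, (himg X hX).1, ?_, rfl⟩, ?_⟩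
          · rintro _ ⟨x, hx, rfl⟩
            exact secInv_mapsTo U L hfS (hXU hx)
          · show pmap σ (arcs (mkb U L X)) = arcs (mkb U L (⇑f '' X))
            exact pmap_sec U L hfS hσ (himg X hX).2
        · rintro ⟨W, ⟨Y, hY, hYU, rfl⟩, rfl⟩
          obtain ⟨X, hX, rfl⟩ := hrev Y hY
          have hXU : X ⊆ (U : Set G) := by
            intro x hx
            have h1 : f x ∈ U := hYU ⟨x, hx, rfl⟩
            have h2 := secInv_inv_mem U L hfS h1
            simpa using h2
          refine ⟨mkb U L X, ⟨X, hX, hXU, rfl⟩, ?_⟩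
          show arcs (mkb U L (⇑f '' X)) = pmap σ (arcs (mkb U L X))
          exact (pmap_sec U L hfS hσ (himg X hX).2).symm
      rw [hCI] at hσiso
      obtain ⟨γ', hγ'aut, ψ0, hdecomp⟩ := hσiso
      have hγ'0 : γ' 0 = 0 := by
        have h := hdecomp 0
        rw [hσ0] at h
        have h2 : ψ0 (γ' 0) = ψ0 0 := by rw [← h]; simp
        exact ψ0.injective h2
      obtain ⟨eγ', heγ'⟩ := exists_addAut_of_normalizes γ' hγ'0
        (fun t ht => hNorm γ' hγ'aut t ht)
      refine ⟨eγ'.trans ψ0, fun x => ?_⟩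
      show σ x = ψ0 (eγ' x)
      rw [← heγ' x]
      exact hdecomp x
  refine ⟨main, ?_⟩
  intro T hTgen hTfix
  obtain ⟨ψ, hψ⟩ := main
  have hfix : ∀ x : ↥U ⧸ L.addSubgroupOf U, σ x = x := by
    set K : AddSubgroup (↥U ⧸ L.addSubgroupOf U) :=
      { carrier := {y | σ y = y}
        zero_mem' := by show σ 0 = 0; rw [hψ 0]; exact map_zero ψ
        add_mem' := by
          intro a b ha hb
          show σ (a + b) = a + b
          have ha' : σ a = a := ha
          have hb' : σ b = b := hb
          rw [hψ (a + b), map_add, ← hψ a, ← hψ b, ha', hb']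
        neg_mem' := by
          intro a ha
          show σ (-a) = -a
          have ha' : σ a = a := ha
          rw [hψ (-a), map_neg, ← hψ a, ha'] } with hKdef
    intro x
    have hx : x ∈ AddSubgroup.closure T := by rw [hTgen]; trivial
    have hle : AddSubgroup.closure T ≤ K :=
      (AddSubgroup.closure_le K).mpr (fun t ht => hTfix t ht)
    exact hle hx
  exact Equiv.ext hfix
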